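/- Monotone embedding of Rademacher graph norms in discrete tori: for any p ≥ 1 and integers k, d ≥ 1, N_{ε,p}(ℤ₂^d) ≤ N_{ε,p}(ℤ_{2k}^d) ≤ 2 N_{ε,p}(ℤ₂^d). -/

import Mathlib

open MeasureTheory ProbabilityTheory
open scoped Classical

/-- The discrete torus graph `ℤ_m^d`: vertices are `d`-tuples over `ZMod m`, and two
vertices are adjacent iff they differ by `±1 (mod m)` in exactly one coordinate. -/
def torus (m d : ℕ) : SimpleGraph (Fin d → ZMod m) where
  Adj x y := x ≠ y ∧ ∃ i, (y i = x i + 1 ∨ y i = x i - 1) ∧ ∀ j, j ≠ i → x j = y j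
  symm := ⟨by
    rintro x y ⟨hne, i, hi, hj⟩
    refine ⟨hne.symm, i, ?_, fun j hji => (hj j hji).symm⟩
    rcases hi with h | h
    · right; rw [h]; ring
    · left; rw [h]; ring⟩
  loopless := ⟨fun x h => h.1 rfl⟩

/-- The `L_p` Rademacher norm `N_{ε,p}(G)` of a graph `G`, with respect to a family `ε`
of random signs indexed by ordered pairs of vertices. -/
noncomputable def graphRadNorm {V : Type*} [Fintype V] {Ω : Type*} [MeasureSpace Ω]
    (G : SimpleGraph V) (ε : V × V → Ω → ℝ) (p : ℝ) : ℝ :=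
  sSup {x | ∃ s t : V → ℝ, ∑ v, s v ^ 2 ≤ 1 ∧ ∑ v, t v ^ 2 ≤ 1 ∧
    x = (∫ ω, |∑ i, ∑ j, if G.Adj i j then ε (i, j) ω * s i * t j else 0| ^ p) ^ (1 / p)}

namespace Stmt16Aux

noncomputable def sgn (b : Bool) : ℝ := if b then 1 else -1

lemma sgn_inj : Function.Injective sgn := by
  intro a b h
  cases a <;> cases b <;> simp [sgn] at h ⊢ <;> norm_num at h

variable {ι : Type*} [Fintype ι]

noncomputable def radAvg (a : ι → ℝ) (p : ℝ) : ℝ :=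
  (∑ σ : ι → Bool, |∑ q, a q * sgn (σ q)| ^ p) / 2 ^ (Fintype.card ι)

noncomputable def nrm (a : ι → ℝ) (p : ℝ) : ℝ := radAvg a p ^ (1/p)

lemma card_fun_bool {α : Type*} {inst : Fintype (α → Bool)} [Fintype α] :
    @Fintype.card (α → Bool) inst = 2 ^ Fintype.card α := by
  classical
  rw [Subsingleton.elim inst Pi.instFintype, Fintype.card_fun, Fintype.card_bool]

lemma card_univ_bool : (Finset.univ : Finset (ι → Bool)).card = 2 ^ Fintype.card ι := by
  rw [Finset.card_univ, card_fun_bool]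

lemma integral_rad {Ω : Type*} [MeasureSpace Ω] [IsProbabilityMeasure (ℙ : Measure Ω)]
    (ε : ι → Ω → ℝ) (hmeas : ∀ q, Measurable (ε q))
    (hindep : iIndepFun ε ℙ)
    (hval : ∀ q ω, ε q ω = 1 ∨ ε q ω = -1)
    (hsym : ∀ q, ℙ {ω | ε q ω = 1} = 1 / 2)
    (G : (ι → ℝ) → ℝ) :
    ∫ ω, G (fun q => ε q ω) = (∑ σ : ι → Bool, G (fun q => sgn (σ q))) / 2 ^ (Fintype.card ι) := by
  have hhalf : ∀ (q : ι) (b : Bool), ℙ ((ε q) ⁻¹' {sgn b}) = 1 / 2 := by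
    intro q b
    cases b
    · have hset : (ε q) ⁻¹' {sgn false} = {ω | ε q ω = 1}ᶜ := by
        ext ω
        simp only [Set.mem_preimage, Set.mem_singleton_iff, Set.mem_compl_iff, Set.mem_setOf_eq,
          sgn]
        constructor
        · intro h h1; rw [h1] at h; norm_num at h
        · intro h; rcases hval q ω with h1 | h1
          · exact absurd h1 h
          · simpa using h1
      have hms : MeasurableSet {ω | ε q ω = 1} := by
        have : {ω | ε q ω = 1} = (ε q) ⁻¹' {1} := rfl
        rw [this]; exact hmeas q (measurableSet_singleton _)
      rw [hset, measure_compl hms (measure_ne_top _ _), measure_univ, hsym q]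
      simp [one_div, ENNReal.one_sub_inv_two]
    · have hset : (ε q) ⁻¹' {sgn true} = {ω | ε q ω = 1} := by
        ext ω; simp [sgn]
      rw [hset, hsym q]
  set A : (ι → Bool) → Set Ω := fun σ => {ω | ∀ q, ε q ω = sgn (σ q)} with hA
  have hAeq : ∀ σ, A σ = ⋂ q, (ε q) ⁻¹' {sgn (σ q)} := by
    intro σ; ext ω; simp [hA]
  have hAm : ∀ σ, MeasurableSet (A σ) := by
    intro σ; rw [hAeq]
    exact MeasurableSet.iInter fun q => hmeas q (measurableSet_singleton _)
  have hprob : ∀ σ, ℙ (A σ) = ((1 : ENNReal) / 2) ^ (Fintype.card ι) := by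
    intro σ
    rw [hAeq]
    rw [hindep.meas_iInter (fun q => ⟨{sgn (σ q)}, measurableSet_singleton _, rfl⟩)]
    simp [hhalf, Finset.prod_const]
  have hpt : ∀ ω, G (fun q => ε q ω) =
      ∑ σ : ι → Bool, Set.indicator (A σ) (fun _ => G (fun q => sgn (σ q))) ω := by
    intro ω
    set σ₀ : ι → Bool := fun q => if ε q ω = 1 then true else false with hσ₀
    have hs0 : ∀ q, sgn (σ₀ q) = ε q ω := by
      intro q
      simp only [hσ₀]
      split_ifs with h
      · simp [sgn, h]
      · rcases hval q ω with h1 | h1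
        · exact absurd h1 h
        · simp [sgn, h1]
    have hmem : ω ∈ A σ₀ := fun q => (hs0 q).symm
    rw [Finset.sum_eq_single σ₀]
    · rw [Set.indicator_of_mem hmem]
      congr 1
      exact funext fun q => (hs0 q).symm
    · intro σ _ hne
      apply Set.indicator_of_notMem
      intro hmemσ
      apply hne
      funext q
      apply sgn_inj
      rw [← hmemσ q, hs0 q]
    · intro h; exact absurd (Finset.mem_univ _) h
  calc ∫ ω, G (fun q => ε q ω)
      = ∫ ω, ∑ σ : ι → Bool, Set.indicator (A σ) (fun _ => G (fun q => sgn (σ q))) ω := by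
        exact integral_congr_ae (Filter.Eventually.of_forall hpt)
    _ = ∑ σ : ι → Bool, ∫ ω, Set.indicator (A σ) (fun _ => G (fun q => sgn (σ q))) ω := by
        apply integral_finset_sum
        intro σ _
        exact (integrable_const _).indicator (hAm σ)
    _ = ∑ σ : ι → Bool, (ℙ (A σ)).toReal • G (fun q => sgn (σ q)) := by
        refine Finset.sum_congr rfl fun σ _ => ?_
        exact integral_indicator_const _ (hAm σ)
    _ = (∑ σ : ι → Bool, G (fun q => sgn (σ q))) / 2 ^ (Fintype.card ι) := by
        rw [Finset.sum_div]
        refine Finset.sum_congr rfl fun σ _ => ?_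
        rw [hprob σ]
        rw [smul_eq_mul]
        rw [ENNReal.toReal_pow, ENNReal.toReal_div, ENNReal.toReal_one, ENNReal.toReal_ofNat]
        rw [div_pow, one_pow, div_mul_eq_mul_div, one_mul]



noncomputable def coef {V : Type*} [Fintype V] (G : SimpleGraph V) (s t : V → ℝ) :
    V × V → ℝ :=
  fun q => if G.Adj q.1 q.2 then s q.1 * t q.2 else 0

def detSet {V : Type*} [Fintype V] (G : SimpleGraph V) (p : ℝ) : Set ℝ :=
  {x | ∃ s t : V → ℝ, ∑ v, s v ^ 2 ≤ 1 ∧ ∑ v, t v ^ 2 ≤ 1 ∧ x = nrm (coef G s t) p}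

lemma graphRadNorm_eq {V : Type*} [Fintype V] {Ω : Type*} [MeasureSpace Ω]
    [IsProbabilityMeasure (ℙ : Measure Ω)] (G : SimpleGraph V)
    (ε : V × V → Ω → ℝ) (hmeas : ∀ q, Measurable (ε q))
    (hindep : iIndepFun ε ℙ)
    (hval : ∀ q ω, ε q ω = 1 ∨ ε q ω = -1)
    (hsym : ∀ q, ℙ {ω | ε q ω = 1} = 1 / 2) (p : ℝ) :
    graphRadNorm G ε p = sSup (detSet G p) := by
  unfold graphRadNorm detSet
  congr 1
  ext x
  refine exists_congr fun s => exists_congr fun t => and_congr_right fun _ =>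
    and_congr_right fun _ => ?_
  have key : (∫ ω, |∑ i, ∑ j, if G.Adj i j then ε (i, j) ω * s i * t j else 0| ^ p)
      = radAvg (coef G s t) p := by
    have h1 : (∫ ω, |∑ i, ∑ j, if G.Adj i j then ε (i, j) ω * s i * t j else 0| ^ p)
        = ∫ ω, (fun e : V × V → ℝ =>
            |∑ i, ∑ j, if G.Adj i j then e (i, j) * s i * t j else 0| ^ p)
            (fun q => ε q ω) := rfl
    rw [h1, integral_rad ε hmeas hindep hval hsym
      (fun e : V × V → ℝ => |∑ i, ∑ j, if G.Adj i j then e (i, j) * s i * t j else 0| ^ p)]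
    unfold radAvg
    congr 1
    refine Finset.sum_congr rfl fun σ _ => ?_
    congr 1
    congr 1
    rw [Fintype.sum_prod_type]
    refine Finset.sum_congr rfl fun i _ => Finset.sum_congr rfl fun j _ => ?_
    simp only [coef]
    split_ifs <;> ring
  unfold nrm
  rw [key]

lemma radAvg_nonneg (a : ι → ℝ) (p : ℝ) : 0 ≤ radAvg a p := by
  apply div_nonneg _ (by positivity)
  exact Finset.sum_nonneg fun σ _ => Real.rpow_nonneg (abs_nonneg _) p

lemma nrm_nonneg (a : ι → ℝ) (p : ℝ) : 0 ≤ nrm a p :=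
  Real.rpow_nonneg (radAvg_nonneg a p) _

lemma nrm_zero_coef {p : ℝ} (hp : 1 ≤ p) (a : ι → ℝ) (ha : ∀ q, a q = 0) : nrm a p = 0 := by
  have hp0 : p ≠ 0 := by positivity
  unfold nrm radAvg
  have : ∀ σ : ι → Bool, |∑ q, a q * sgn (σ q)| ^ p = 0 := by
    intro σ
    have : ∑ q, a q * sgn (σ q) = 0 := Finset.sum_eq_zero fun q _ => by rw [ha q, zero_mul]
    rw [this, abs_zero, Real.zero_rpow hp0]
  rw [Finset.sum_congr rfl fun σ _ => this σ, Finset.sum_const, smul_zero, zero_div,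
    Real.zero_rpow (by positivity)]

lemma zero_mem_detSet {V : Type*} [Fintype V] (G : SimpleGraph V) {p : ℝ} (hp : 1 ≤ p) :
    (0 : ℝ) ∈ detSet G p := by
  refine ⟨0, 0, by simp, by simp, ?_⟩
  rw [nrm_zero_coef hp]
  intro q
  unfold coef
  split_ifs <;> simp

lemma abs_coef_le_one {V : Type*} [Fintype V] (G : SimpleGraph V) {s t : V → ℝ}
    (hs : ∑ v, s v ^ 2 ≤ 1) (ht : ∑ v, t v ^ 2 ≤ 1) (q : V × V) : |coef G s t q| ≤ 1 := by
  have hb : ∀ (f : V → ℝ), (∑ v, f v ^ 2 ≤ 1) → ∀ v, |f v| ≤ 1 := by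
    intro f hf v
    have h1 : f v ^ 2 ≤ 1 :=
      le_trans (Finset.single_le_sum (fun i _ => sq_nonneg (f i)) (Finset.mem_univ v)) hf
    nlinarith [abs_nonneg (f v), sq_abs (f v)]
  unfold coef
  split_ifs
  · rw [abs_mul]
    exact mul_le_one₀ (hb s hs q.1) (abs_nonneg _) (hb t ht q.2)
  · simp

lemma bddAbove_detSet {V : Type*} [Fintype V] (G : SimpleGraph V) {p : ℝ} (hp : 1 ≤ p) :
    BddAbove (detSet G p) := by
  have hp0 : 0 < p := by positivity
  refine ⟨(Fintype.card (V × V) : ℝ), fun x hx => ?_⟩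
  obtain ⟨s, t, hs, ht, rfl⟩ := hx
  set C : ℝ := (Fintype.card (V × V) : ℝ) with hC
  have hC0 : 0 ≤ C := Nat.cast_nonneg _
  have hterm : ∀ σ : (V × V) → Bool, |∑ q, coef G s t q * sgn (σ q)| ≤ C := by
    intro σ
    calc |∑ q, coef G s t q * sgn (σ q)| ≤ ∑ q, |coef G s t q * sgn (σ q)| :=
          Finset.abs_sum_le_sum_abs _ _
      _ ≤ ∑ _q : V × V, (1 : ℝ) := by
          refine Finset.sum_le_sum fun q _ => ?_
          rw [abs_mul]
          have hsg : |sgn (σ q)| = 1 := by cases σ q <;> simp [sgn]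
          rw [hsg, mul_one]
          exact abs_coef_le_one G hs ht q
      _ = C := by simp [hC]
  have hravg : radAvg (coef G s t) p ≤ C ^ p := by
    unfold radAvg
    rw [div_le_iff₀ (by positivity)]
    refine le_trans (Finset.sum_le_sum fun σ _ =>
      Real.rpow_le_rpow (abs_nonneg _) (hterm σ) hp0.le) ?_
    rw [Finset.sum_const, card_univ_bool, nsmul_eq_mul]
    push_cast
    ring_nf
    exact le_refl _
  calc nrm (coef G s t) p ≤ (C ^ p) ^ (1/p) := by
        exact Real.rpow_le_rpow (radAvg_nonneg _ _) hravg (by positivity)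
    _ = C := by
        rw [← Real.rpow_mul hC0, mul_one_div, div_self hp0.ne', Real.rpow_one]



lemma radAvg_comp {ι₁ ι₂ : Type*} [Fintype ι₁] [Fintype ι₂] (Φ : ι₁ → ι₂)
    (hΦ : Function.Injective Φ) (a₂ : ι₂ → ℝ) (a₁ : ι₁ → ℝ)
    (hsupp : ∀ q, q ∉ Set.range Φ → a₂ q = 0)
    (hcomp : ∀ q, a₂ (Φ q) = a₁ q) (p : ℝ) :
    radAvg a₂ p = radAvg a₁ p := by
  have hsum : ∀ σ₂ : ι₂ → Bool,
      ∑ q, a₂ q * sgn (σ₂ q) = ∑ q, a₁ q * sgn (σ₂ (Φ q)) := by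
    intro σ₂
    have h1 : ∑ q, a₂ q * sgn (σ₂ q)
        = ∑ q ∈ Finset.univ.image Φ, a₂ q * sgn (σ₂ q) := by
      refine (Finset.sum_subset (Finset.subset_univ _) fun x _ hx => ?_).symm
      have hxr : x ∉ Set.range Φ := by
        intro ⟨u, hu⟩
        exact hx (Finset.mem_image.mpr ⟨u, Finset.mem_univ u, hu⟩)
      rw [hsupp x hxr, zero_mul]
    rw [h1, Finset.sum_image (fun x _ y _ h => hΦ h)]
    exact Finset.sum_congr rfl fun q _ => by rw [hcomp]
  let e : (ι₂ → Bool) ≃ ((ι₁ → Bool) × ({x : ι₂ // x ∉ Set.range Φ} → Bool)) :=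
    { toFun := fun σ₂ => (fun q => σ₂ (Φ q), fun x => σ₂ x.1)
      invFun := fun P x => if h : ∃ q, Φ q = x then P.1 h.choose else P.2 ⟨x, fun hc => h hc⟩
      left_inv := by
        intro σ₂
        funext x
        by_cases h : ∃ q, Φ q = x
        · simp only [dif_pos h]
          rw [h.choose_spec]
        · simp only [dif_neg h]
      right_inv := by
        intro P
        refine Prod.ext ?_ ?_
        · funext q
          have h : ∃ q', Φ q' = Φ q := ⟨q, rfl⟩
          simp only [dif_pos h]
          exact congrArg P.1 (hΦ h.choose_spec)
        · funext x
          have h : ¬∃ q, Φ q = x.1 := fun hc => x.2 hc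
          simp only [dif_neg h] }
  have hPq : ∀ (P : (ι₁ → Bool) × ({x : ι₂ // x ∉ Set.range Φ} → Bool)) (q : ι₁),
      e.symm P (Φ q) = P.1 q := by
    intro P q
    exact congrFun (congrArg Prod.fst (e.apply_symm_apply P)) q
  set m := Fintype.card {x : ι₂ // x ∉ Set.range Φ} with hm
  have hstep : ∑ σ₂ : ι₂ → Bool, |∑ q, a₁ q * sgn (σ₂ (Φ q))| ^ p
      = (2 : ℝ) ^ m * ∑ σ₁ : ι₁ → Bool, |∑ q, a₁ q * sgn (σ₁ q)| ^ p := by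
    rw [← Equiv.sum_comp e.symm (fun σ₂ : ι₂ → Bool => |∑ q, a₁ q * sgn (σ₂ (Φ q))| ^ p)]
    have : ∀ P, |∑ q, a₁ q * sgn (e.symm P (Φ q))| ^ p
        = |∑ q, a₁ q * sgn (P.1 q)| ^ p := by
      intro P
      congr 2
      exact Finset.sum_congr rfl fun q _ => by rw [hPq P q]
    rw [Finset.sum_congr rfl fun P _ => this P]
    rw [Fintype.sum_prod_type, Finset.mul_sum]
    refine Finset.sum_congr rfl fun σ₁ _ => ?_
    have hconst : (∑ _τ : {x : ι₂ // x ∉ Set.range Φ} → Bool, |∑ q, a₁ q * sgn (σ₁ q)| ^ p)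
        = 2 ^ m * |∑ q, a₁ q * sgn (σ₁ q)| ^ p := by
      rw [Finset.sum_const, Finset.card_univ, card_fun_bool, ← hm, nsmul_eq_mul]
      push_cast
      ring
    exact hconst
  have hn : (2:ℕ) ^ Fintype.card ι₂ = 2 ^ Fintype.card ι₁ * 2 ^ m := by
    calc (2:ℕ) ^ Fintype.card ι₂ = Fintype.card (ι₂ → Bool) := card_fun_bool.symm
      _ = Fintype.card ((ι₁ → Bool) × ({x : ι₂ // x ∉ Set.range Φ} → Bool)) :=
          Fintype.card_congr e
      _ = Fintype.card (ι₁ → Bool) * Fintype.card ({x : ι₂ // x ∉ Set.range Φ} → Bool) :=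
          Fintype.card_prod _ _
      _ = 2 ^ Fintype.card ι₁ * 2 ^ m := by rw [card_fun_bool, card_fun_bool]
  have hcard : (2 : ℝ) ^ (Fintype.card ι₂) = 2 ^ (Fintype.card ι₁) * 2 ^ m := by
    exact_mod_cast congrArg (Nat.cast : ℕ → ℝ) hn
  unfold radAvg
  rw [Finset.sum_congr rfl fun σ₂ _ => by rw [hsum σ₂]]
  rw [hstep, hcard]
  have h1 : (2:ℝ) ^ Fintype.card ι₁ ≠ 0 := by positivity
  have h2 : (2:ℝ) ^ m ≠ 0 := by positivity
  field_simp

lemma nrm_comp {ι₁ ι₂ : Type*} [Fintype ι₁] [Fintype ι₂] (Φ : ι₁ → ι₂)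
    (hΦ : Function.Injective Φ) (a₂ : ι₂ → ℝ) (a₁ : ι₁ → ℝ)
    (hsupp : ∀ q, q ∉ Set.range Φ → a₂ q = 0)
    (hcomp : ∀ q, a₂ (Φ q) = a₁ q) (p : ℝ) :
    nrm a₂ p = nrm a₁ p := by
  unfold nrm
  rw [radAvg_comp Φ hΦ a₂ a₁ hsupp hcomp p]

section Lp

variable {p : ℝ}

noncomputable def Tmap (p : ℝ) (a : ι → ℝ) : PiLp (ENNReal.ofReal p) (fun _ : ι → Bool => ℝ) :=
  WithLp.toLp _ fun σ => ∑ q, a q * sgn (σ q)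

lemma nrm_eq_pilp (hp : 1 ≤ p) (a : ι → ℝ) :
    nrm a p = ‖(Tmap p a : PiLp (ENNReal.ofReal p) (fun _ : ι → Bool => ℝ))‖
      / ((2 : ℝ) ^ Fintype.card ι) ^ (1/p) := by
  have hp0 : 0 < p := lt_of_lt_of_le one_pos hp
  have htr : (ENNReal.ofReal p).toReal = p := ENNReal.toReal_ofReal hp0.le
  rw [PiLp.norm_eq_sum (by rw [htr]; exact hp0)]
  rw [htr]
  unfold nrm radAvg
  rw [Real.div_rpow (Finset.sum_nonneg fun σ _ => Real.rpow_nonneg (abs_nonneg _) p)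
    (by positivity)]
  rfl

lemma nrm_sum_le {J : Type*} (F : Finset J) (A : J → ι → ℝ) (hp : 1 ≤ p) :
    nrm (fun q => ∑ j ∈ F, A j q) p ≤ ∑ j ∈ F, nrm (A j) p := by
  haveI : Fact (1 ≤ ENNReal.ofReal p) := ⟨by rwa [ENNReal.one_le_ofReal]⟩
  have hT : (Tmap p (fun q => ∑ j ∈ F, A j q) :
      PiLp (ENNReal.ofReal p) (fun _ : ι → Bool => ℝ)) = ∑ j ∈ F, Tmap p (A j) := by
    refine PiLp.ext fun σ => ?_
    have h2 : (∑ j ∈ F, (Tmap p (A j) : PiLp (ENNReal.ofReal p) (fun _ : ι → Bool => ℝ))) σ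
        = ∑ j ∈ F, Tmap p (A j) σ := by
      rw [WithLp.ofLp_sum]; exact Finset.sum_apply σ F _
    rw [h2]
    unfold Tmap
    simp only [WithLp.ofLp_toLp]
    rw [Finset.sum_comm]
    exact Finset.sum_congr rfl fun q _ => by rw [Finset.sum_mul]
  rw [nrm_eq_pilp hp]
  rw [hT]
  have hD : (0:ℝ) < ((2 : ℝ) ^ Fintype.card ι) ^ (1/p) := by positivity
  rw [div_le_iff₀ hD]
  refine le_trans (norm_sum_le F _) ?_
  rw [Finset.sum_mul]
  refine Finset.sum_le_sum fun j _ => ?_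
  rw [nrm_eq_pilp hp, div_mul_cancel₀]
  exact hD.ne'

lemma nrm_smul (c : ℝ) (a : ι → ℝ) (hp : 1 ≤ p) :
    nrm (fun q => c * a q) p = |c| * nrm a p := by
  haveI : Fact (1 ≤ ENNReal.ofReal p) := ⟨by rwa [ENNReal.one_le_ofReal]⟩
  have hT : (Tmap p (fun q => c * a q) :
      PiLp (ENNReal.ofReal p) (fun _ : ι → Bool => ℝ)) = c • Tmap p a := by
    refine PiLp.ext fun σ => ?_
    have h2 : (c • (Tmap p a : PiLp (ENNReal.ofReal p) (fun _ : ι → Bool => ℝ))) σ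
        = c • (Tmap p a σ) := rfl
    rw [h2]
    unfold Tmap
    simp only [WithLp.ofLp_toLp, smul_eq_mul, Finset.mul_sum]
    exact Finset.sum_congr rfl fun q _ => by ring
  rw [nrm_eq_pilp hp, nrm_eq_pilp hp, hT, norm_smul, Real.norm_eq_abs, mul_div_assoc]

end Lp



lemma sSup_detSet_nonneg {V : Type*} [Fintype V] (G : SimpleGraph V) {p : ℝ} (hp : 1 ≤ p) :
    0 ≤ sSup (detSet G p) :=
  le_csSup (bddAbove_detSet G hp) (zero_mem_detSet G hp)

lemma nrm_coef_le {V : Type*} [Fintype V] (G : SimpleGraph V) (s t : V → ℝ) {p : ℝ}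
    (hp : 1 ≤ p) :
    nrm (coef G s t) p ≤
      Real.sqrt (∑ v, s v ^ 2) * Real.sqrt (∑ v, t v ^ 2) * sSup (detSet G p) := by
  set α := Real.sqrt (∑ v, s v ^ 2) with hα
  set β := Real.sqrt (∑ v, t v ^ 2) with hβ
  have hα0 : 0 ≤ α := Real.sqrt_nonneg _
  have hβ0 : 0 ≤ β := Real.sqrt_nonneg _
  have hs2 : α ^ 2 = ∑ v, s v ^ 2 := Real.sq_sqrt (Finset.sum_nonneg fun v _ => sq_nonneg _)
  have ht2 : β ^ 2 = ∑ v, t v ^ 2 := Real.sq_sqrt (Finset.sum_nonneg fun v _ => sq_nonneg _)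
  rcases eq_or_lt_of_le hα0 with hA | hA
  · have hz : ∀ v, s v = 0 := by
      intro v
      have h0 : ∑ v, s v ^ 2 = 0 := by rw [← hs2, ← hA]; ring
      have := (Finset.sum_eq_zero_iff_of_nonneg (fun v _ => sq_nonneg (s v))).mp h0 v
        (Finset.mem_univ v)
      exact pow_eq_zero_iff (n := 2) (by norm_num) |>.mp this
    have : nrm (coef G s t) p = 0 := by
      apply nrm_zero_coef hp
      intro q
      unfold coef
      split_ifs <;> simp [hz]
    rw [this, ← hA]
    simp
  rcases eq_or_lt_of_le hβ0 with hB | hB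
  · have hz : ∀ v, t v = 0 := by
      intro v
      have h0 : ∑ v, t v ^ 2 = 0 := by rw [← ht2, ← hB]; ring
      have := (Finset.sum_eq_zero_iff_of_nonneg (fun v _ => sq_nonneg (t v))).mp h0 v
        (Finset.mem_univ v)
      exact pow_eq_zero_iff (n := 2) (by norm_num) |>.mp this
    have : nrm (coef G s t) p = 0 := by
      apply nrm_zero_coef hp
      intro q
      unfold coef
      split_ifs <;> simp [hz]
    rw [this, ← hB]
    simp
  · have hsc : ∀ q, coef G s t q = (α * β) * coef G (fun v => α⁻¹ * s v) (fun v => β⁻¹ * t v) q := by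
      intro q
      unfold coef
      split_ifs
      · field_simp
      · ring
    have hmem : nrm (coef G (fun v => α⁻¹ * s v) (fun v => β⁻¹ * t v)) p ∈ detSet G p := by
      refine ⟨_, _, ?_, ?_, rfl⟩
      · have : ∑ v, (α⁻¹ * s v) ^ 2 = (α^2)⁻¹ * ∑ v, s v ^ 2 := by
          rw [Finset.mul_sum]
          exact Finset.sum_congr rfl fun v _ => by ring
        rw [this, ← hs2, inv_mul_cancel₀ (by positivity)]
      · have : ∑ v, (β⁻¹ * t v) ^ 2 = (β^2)⁻¹ * ∑ v, t v ^ 2 := by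
          rw [Finset.mul_sum]
          exact Finset.sum_congr rfl fun v _ => by ring
        rw [this, ← ht2, inv_mul_cancel₀ (by positivity)]
    calc nrm (coef G s t) p
        = |α * β| * nrm (coef G (fun v => α⁻¹ * s v) (fun v => β⁻¹ * t v)) p := by
          rw [← nrm_smul (α * β) _ hp]
          congr 1
          funext q
          exact hsc q
      _ ≤ α * β * sSup (detSet G p) := by
          rw [abs_of_nonneg (by positivity)]
          exact mul_le_mul_of_nonneg_left (le_csSup (bddAbove_detSet G hp) hmem) (by positivity)



section Torus

variable {k d : ℕ}

noncomputable def lift2 (k : ℕ) (v : ZMod 2) : ZMod (2 * k) := (v.val : ZMod (2 * k))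

noncomputable def emb (k : ℕ) {d : ℕ} (z : Fin d → ZMod (2 * k)) (u : Fin d → ZMod 2) :
    Fin d → ZMod (2 * k) := fun m => z m + lift2 k (u m)

lemma zmod2_cases : ∀ a : ZMod 2, a = 0 ∨ a = 1 := by decide

lemma zmod2_ne : ∀ a b : ZMod 2, a ≠ b → b = a + 1 := by decide

lemma zmod2_pair : ∀ a b : ZMod 2, a ≠ b → (a = 0 ∧ b = 1) ∨ (a = 1 ∧ b = 0) := by decide

lemma lift2_zero : lift2 k 0 = 0 := by
  unfold lift2
  norm_num [ZMod.val_zero]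

lemma lift2_one : lift2 k 1 = 1 := by
  unfold lift2
  have : (1 : ZMod 2).val = 1 := by decide
  rw [this]
  norm_num

lemma one_ne_zero_2k (hk : 1 ≤ k) : (1 : ZMod (2 * k)) ≠ 0 := by
  intro h
  have h2 : ((1 : ℕ) : ZMod (2 * k)) = 0 := by exact_mod_cast h
  rw [ZMod.natCast_eq_zero_iff] at h2
  have := Nat.le_of_dvd (by norm_num) h2
  omega

lemma two_ne_zero_2k (hk : 2 ≤ k) : (2 : ZMod (2 * k)) ≠ 0 := by
  intro h
  have h2 : ((2 : ℕ) : ZMod (2 * k)) = 0 := by exact_mod_cast h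
  rw [ZMod.natCast_eq_zero_iff] at h2
  have := Nat.le_of_dvd (by norm_num) h2
  omega

lemma lift2_inj (hk : 1 ≤ k) : Function.Injective (lift2 k) := by
  haveI : NeZero (2 * k) := ⟨by omega⟩
  intro a b h
  have ha : a.val < 2 * k := lt_of_lt_of_le a.val_lt (by omega)
  have hb : b.val < 2 * k := lt_of_lt_of_le b.val_lt (by omega)
  have := congrArg ZMod.val h
  unfold lift2 at this
  rw [ZMod.val_cast_of_lt ha, ZMod.val_cast_of_lt hb] at this
  exact ZMod.val_injective 2 this

lemma emb_inj (hk : 1 ≤ k) (z : Fin d → ZMod (2 * k)) : Function.Injective (emb k z) := by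
  intro u v h
  funext m
  have := congrFun h m
  unfold emb at this
  exact lift2_inj hk (add_left_cancel this)

lemma torus_adj_elim {m d : ℕ} {x y : Fin d → ZMod m} (h : (torus m d).Adj x y) :
    ∃ c, x c ≠ y c ∧ (y c = x c + 1 ∨ y c = x c - 1) ∧ ∀ j, j ≠ c → x j = y j := by
  obtain ⟨hne, c, hc, hoff⟩ := h
  refine ⟨c, ?_, hc, hoff⟩
  intro hcc
  apply hne
  funext j
  by_cases hj : j = c
  · rw [hj]; exact hcc
  · exact hoff j hj

lemma emb_adj (hk : 1 ≤ k) (z : Fin d → ZMod (2 * k)) (u v : Fin d → ZMod 2) :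
    (torus (2 * k) d).Adj (emb k z u) (emb k z v) ↔ (torus 2 d).Adj u v := by
  constructor
  · intro h
    obtain ⟨c, hnec, _, hoff⟩ := torus_adj_elim h
    have huvc : u c ≠ v c := by
      intro hcc
      apply hnec
      unfold emb
      rw [hcc]
    have hoff' : ∀ j, j ≠ c → u j = v j := by
      intro j hj
      have := hoff j hj
      unfold emb at this
      exact lift2_inj hk (add_left_cancel this)
    refine ⟨?_, c, Or.inl (zmod2_ne _ _ huvc), hoff'⟩
    intro hcc
    exact huvc (congrFun hcc c)
  · intro h
    obtain ⟨c, hnec, _, hoff⟩ := torus_adj_elim h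
    refine ⟨?_, c, ?_, ?_⟩
    · intro hcc
      exact hnec (emb_inj hk z (funext fun m => congrFun hcc m) ▸ rfl)
    · rcases zmod2_pair _ _ hnec with ⟨h0, h1⟩ | ⟨h0, h1⟩
      · left
        unfold emb
        rw [h0, h1, lift2_zero, lift2_one]
        ring
      · right
        unfold emb
        rw [h0, h1, lift2_zero, lift2_one]
        ring
    · intro j hj
      unfold emb
      rw [hoff j hj]

noncomputable def uOf (k : ℕ) {d : ℕ} (z x : Fin d → ZMod (2 * k)) : Fin d → ZMod 2 :=
  fun m => if x m = z m then 0 else 1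

lemma emb_uOf (hk : 1 ≤ k) {z x : Fin d → ZMod (2 * k)}
    (hx : ∀ m, x m = z m ∨ x m = z m + 1) : emb k z (uOf k z x) = x := by
  funext m
  unfold emb uOf
  by_cases h : x m = z m
  · rw [if_pos h, lift2_zero, add_zero, h]
  · rw [if_neg h, lift2_one]
    rcases hx m with h1 | h1
    · exact absurd h1 h
    · rw [h1]

lemma mem_range_emb (hk : 1 ≤ k) (z x : Fin d → ZMod (2 * k)) :
    (∃ u, emb k z u = x) ↔ ∀ m, x m = z m ∨ x m = z m + 1 := by
  constructor
  · rintro ⟨u, rfl⟩ m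
    rcases zmod2_cases (u m) with h | h
    · left; unfold emb; rw [h, lift2_zero, add_zero]
    · right; unfold emb; rw [h, lift2_one]
  · intro hx
    exact ⟨uOf k z x, emb_uOf hk hx⟩

lemma count_blocks [NeZero (2 * k)] (hk2 : 2 ≤ k) {i j : Fin d → ZMod (2 * k)}
    (hadj : (torus (2 * k) d).Adj i j) :
    (Finset.univ.filter fun z : Fin d → ZMod (2 * k) =>
      ∃ u v, (torus 2 d).Adj u v ∧ emb k z u = i ∧ emb k z v = j).card = 2 ^ (d - 1) := by
  have hk : 1 ≤ k := by omega
  have h1ne : (1 : ZMod (2 * k)) ≠ 0 := one_ne_zero_2k hk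
  have h2ne : (2 : ZMod (2 * k)) ≠ 0 := two_ne_zero_2k hk2
  obtain ⟨c, hnec, hdir, hoff⟩ := torus_adj_elim hadj
  set P : Fin d → ZMod (2 * k) → Prop :=
    fun m ζ => (i m = ζ ∨ i m = ζ + 1) ∧ (j m = ζ ∨ j m = ζ + 1) with hP
  have hcond : ∀ z : Fin d → ZMod (2 * k),
      (∃ u v, (torus 2 d).Adj u v ∧ emb k z u = i ∧ emb k z v = j) ↔ ∀ m, P m (z m) := by
    intro z
    constructor
    · rintro ⟨u, v, _, rfl, rfl⟩ m
      constructor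
      · exact ((mem_range_emb hk z _).mp ⟨u, rfl⟩) m
      · exact ((mem_range_emb hk z _).mp ⟨v, rfl⟩) m
    · intro hz
      have hi : ∀ m, i m = z m ∨ i m = z m + 1 := fun m => (hz m).1
      have hj : ∀ m, j m = z m ∨ j m = z m + 1 := fun m => (hz m).2
      refine ⟨uOf k z i, uOf k z j, ?_, emb_uOf hk hi, emb_uOf hk hj⟩
      have huvne : uOf k z i c ≠ uOf k z j c := by
        unfold uOf
        by_cases hic : i c = z c
        · rw [if_pos hic]
          have hjc : ¬ j c = z c := fun hjc => hnec (hic.trans hjc.symm)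
          rw [if_neg hjc]
          decide
        · rw [if_neg hic]
          have hic1 : i c = z c + 1 := (hi c).resolve_left hic
          have hjc : j c = z c := by
            rcases hj c with h | h
            · exact h
            · exact absurd (hic1.trans h.symm) hnec
          rw [if_pos hjc]
          decide
      have huoff : ∀ m, m ≠ c → uOf k z i m = uOf k z j m := by
        intro m hm
        unfold uOf
        rw [hoff m hm]
      refine ⟨?_, c, Or.inl (zmod2_ne _ _ huvne), huoff⟩
      intro hcc
      exact huvne (congrFun hcc c)
  have hcards : ∀ m : Fin d, m ≠ c →
      (Finset.univ.filter fun ζ : ZMod (2 * k) => P m ζ).card = 2 := by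
    intro m hm
    have hij : i m = j m := hoff m hm
    have hset : (Finset.univ.filter fun ζ : ZMod (2 * k) => P m ζ)
        = {i m, i m - 1} := by
      ext ζ
      simp only [Finset.mem_filter, Finset.mem_univ, true_and, Finset.mem_insert,
        Finset.mem_singleton, hP]
      constructor
      · rintro ⟨h1, _⟩
        rcases h1 with h | h
        · exact Or.inl h.symm
        · right; rw [h]; ring
      · intro h
        have hP1 : i m = ζ ∨ i m = ζ + 1 := by
          rcases h with rfl | rfl
          · exact Or.inl rfl
          · right; ring
        exact ⟨hP1, hij ▸ hP1⟩
    rw [hset, Finset.card_insert_of_notMem, Finset.card_singleton]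
    rw [Finset.mem_singleton]
    intro h
    apply h1ne
    linear_combination h
  have hcardc : (Finset.univ.filter fun ζ : ZMod (2 * k) => P c ζ).card = 1 := by
    rcases hdir with hd1 | hd1
    · have hset : (Finset.univ.filter fun ζ : ZMod (2 * k) => P c ζ) = {i c} := by
        ext ζ
        simp only [Finset.mem_filter, Finset.mem_univ, true_and, Finset.mem_singleton, hP]
        constructor
        · rintro ⟨h1, h2⟩
          rcases h1 with h | h
          · exact h.symm
          · rcases h2 with h2 | h2
            · exfalso; apply h2ne; linear_combination h2 - hd1 - h
            · exact absurd (h.trans h2.symm) hnec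
        · rintro rfl
          exact ⟨Or.inl rfl, Or.inr hd1⟩
      rw [hset, Finset.card_singleton]
    · have hic : i c = j c + 1 := by rw [hd1]; ring
      have hset : (Finset.univ.filter fun ζ : ZMod (2 * k) => P c ζ) = {j c} := by
        ext ζ
        simp only [Finset.mem_filter, Finset.mem_univ, true_and, Finset.mem_singleton, hP]
        constructor
        · rintro ⟨h1, h2⟩
          rcases h2 with h | h
          · exact h.symm
          · rcases h1 with h1 | h1
            · exfalso; apply h2ne; linear_combination h1 - hic - h
            · exact absurd (h1.trans h.symm) hnec
        · rintro rfl
          exact ⟨Or.inr hic, Or.inl rfl⟩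
      rw [hset, Finset.card_singleton]
  have hfilter : (Finset.univ.filter fun z : Fin d → ZMod (2 * k) =>
        ∃ u v, (torus 2 d).Adj u v ∧ emb k z u = i ∧ emb k z v = j)
      = Finset.univ.filter fun z => ∀ m, P m (z m) := by
    ext z
    simp only [Finset.mem_filter, Finset.mem_univ, true_and]
    exact hcond z
  rw [hfilter]
  have hcount : (Finset.univ.filter fun z : Fin d → ZMod (2 * k) => ∀ m, P m (z m)).card
      = ∏ m, (Finset.univ.filter fun ζ : ZMod (2 * k) => P m ζ).card := by
    rw [← Fintype.card_subtype]
    rw [Fintype.card_congr (Equiv.subtypePiEquivPi (p := P))]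
    rw [Fintype.card_pi]
    exact Finset.prod_congr rfl fun m _ => Fintype.card_subtype _
  rw [hcount, ← Finset.mul_prod_erase Finset.univ _ (Finset.mem_univ c), hcardc, one_mul]
  rw [Finset.prod_congr rfl fun m hm => hcards m (Finset.ne_of_mem_erase hm)]
  rw [Finset.prod_const, Finset.card_erase_of_mem (Finset.mem_univ c), Finset.card_univ,
    Fintype.card_fin]

lemma sum_emb [NeZero (2 * k)] (hk : 1 ≤ k) (f : (Fin d → ZMod (2 * k)) → ℝ) :
    ∑ z : Fin d → ZMod (2 * k), ∑ u : Fin d → ZMod 2, f (emb k z u)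
      = 2 ^ d * ∑ x : Fin d → ZMod (2 * k), f x := by
  let e : (Fin d → ZMod (2 * k)) × (Fin d → ZMod 2) ≃ (Fin d → ZMod (2 * k)) × (Fin d → ZMod 2) :=
    { toFun := fun P => (emb k P.1 P.2, P.2)
      invFun := fun P => (fun m => P.1 m - lift2 k (P.2 m), P.2)
      left_inv := by
        intro P
        refine Prod.ext ?_ rfl
        funext m
        simp [emb]
      right_inv := by
        intro P
        refine Prod.ext ?_ rfl
        funext m
        simp [emb] }
  have h1 : ∑ z : Fin d → ZMod (2 * k), ∑ u : Fin d → ZMod 2, f (emb k z u)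
      = ∑ Q : (Fin d → ZMod (2 * k)) × (Fin d → ZMod 2), f ((e Q).1) := by
    rw [Fintype.sum_prod_type]
    rfl
  rw [h1, Equiv.sum_comp e (fun Q => f Q.1), Fintype.sum_prod_type]
  have hcard : Fintype.card (Fin d → ZMod 2) = 2 ^ d := by
    rw [Fintype.card_fun, ZMod.card, Fintype.card_fin]
  rw [Finset.mul_sum]
  refine Finset.sum_congr rfl fun x _ => ?_
  have hc : (∑ _y : Fin d → ZMod 2, f x) = 2 ^ d * f x := by
    rw [Finset.sum_const, Finset.card_univ, hcard, nsmul_eq_mul]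
    push_cast
    ring
  exact hc

end Torus



lemma lower_det (k d : ℕ) [NeZero (2 * k)] (hk : 1 ≤ k) {p : ℝ} (hp : 1 ≤ p) :
    sSup (detSet (torus 2 d) p) ≤ sSup (detSet (torus (2 * k) d) p) := by
  refine csSup_le_csSup (bddAbove_detSet _ hp) ⟨0, zero_mem_detSet _ hp⟩ ?_
  rintro x ⟨s, t, hs, ht, rfl⟩
  set E : (Fin d → ZMod 2) → (Fin d → ZMod (2 * k)) := emb k (fun _ => 0) with hE
  have hEinj : Function.Injective E := emb_inj hk _
  set s' := Function.extend E s 0 with hs'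
  set t' := Function.extend E t 0 with ht'
  have hsum : ∀ f : (Fin d → ZMod 2) → ℝ,
      ∑ y, (Function.extend E f 0 y) ^ 2 = ∑ u, f u ^ 2 := by
    intro f
    have h1 : ∑ y, (Function.extend E f 0 y) ^ 2
        = ∑ y ∈ Finset.univ.image E, (Function.extend E f 0 y) ^ 2 := by
      refine (Finset.sum_subset (Finset.subset_univ _) fun y _ hy => ?_).symm
      have hyr : ¬∃ u, E u = y := fun ⟨u, hu⟩ =>
        hy (Finset.mem_image.mpr ⟨u, Finset.mem_univ u, hu⟩)
      rw [Function.extend_apply' _ _ _ hyr]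
      norm_num
    rw [h1, Finset.sum_image (fun x _ y _ h => hEinj h)]
    exact Finset.sum_congr rfl fun u _ => by rw [hEinj.extend_apply]
  refine ⟨s', t', by rw [hs', hsum]; exact hs, by rw [ht', hsum]; exact ht, ?_⟩
  refine (nrm_comp (fun q : (Fin d → ZMod 2) × (Fin d → ZMod 2) => (E q.1, E q.2))
    ?_ _ _ ?_ ?_ p).symm
  · intro q q' h
    exact Prod.ext (hEinj (congrArg Prod.fst h)) (hEinj (congrArg Prod.snd h))
  · intro q hq
    unfold coef
    split_ifs with hadj
    · by_cases h1 : ∃ u, E u = q.1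
      · by_cases h2 : ∃ v, E v = q.2
        · exfalso
          obtain ⟨u, hu⟩ := h1
          obtain ⟨v, hv⟩ := h2
          exact hq ⟨(u, v), Prod.ext hu hv⟩
        · rw [ht', Function.extend_apply' _ _ _ h2]
          simp
      · rw [hs', Function.extend_apply' _ _ _ h1]
        simp
    · rfl
  · rintro ⟨u, v⟩
    unfold coef
    simp only
    rw [hs', ht', hEinj.extend_apply, hEinj.extend_apply]
    have hiff : (torus (2 * k) d).Adj (E u) (E v) ↔ (torus 2 d).Adj u v := emb_adj hk _ u v
    by_cases h : (torus 2 d).Adj u v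
    · rw [if_pos (hiff.mpr h), if_pos h]
    · rw [if_neg (fun hc => h (hiff.mp hc)), if_neg h]

lemma upper_det (k d : ℕ) [NeZero (2 * k)] (hk2 : 2 ≤ k) (hd : 1 ≤ d) {p : ℝ} (hp : 1 ≤ p) :
    sSup (detSet (torus (2 * k) d) p) ≤ 2 * sSup (detSet (torus 2 d) p) := by
  have hk : 1 ≤ k := by omega
  set N := sSup (detSet (torus 2 d) p) with hN
  have hN0 : 0 ≤ N := sSup_detSet_nonneg _ hp
  refine Real.sSup_le ?_ (by positivity)
  rintro x ⟨s, t, hs, ht, rfl⟩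
  set A : (Fin d → ZMod (2 * k)) → ((Fin d → ZMod (2 * k)) × (Fin d → ZMod (2 * k))) → ℝ :=
    fun z q => if ∃ u v, (torus 2 d).Adj u v ∧ emb k z u = q.1 ∧ emb k z v = q.2
      then s q.1 * t q.2 else 0 with hA
  set c : ℝ := ((2:ℝ) ^ (d - 1))⁻¹ with hc
  have hc0 : 0 < c := by rw [hc]; positivity
  have hdecomp : ∀ q, (2:ℝ) ^ (d - 1) * coef (torus (2 * k) d) s t q = ∑ z, A z q := by
    intro q
    by_cases hadj : (torus (2 * k) d).Adj q.1 q.2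
    · have hcount := count_blocks (i := q.1) (j := q.2) hk2 hadj
      have hsum : ∑ z, A z q
          = ((Finset.univ.filter fun z : Fin d → ZMod (2 * k) =>
              ∃ u v, (torus 2 d).Adj u v ∧ emb k z u = q.1 ∧ emb k z v = q.2).card : ℝ)
            * (s q.1 * t q.2) := by
        rw [hA]
        simp only
        rw [← Finset.sum_filter, Finset.sum_const, nsmul_eq_mul]
      rw [hsum, hcount]
      unfold coef
      rw [if_pos hadj]
      push_cast
      ring
    · have h0 : coef (torus (2 * k) d) s t q = 0 := by
        unfold coef
        rw [if_neg hadj]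
      have hz : ∀ z, A z q = 0 := by
        intro z
        rw [hA]
        simp only
        rw [if_neg]
        rintro ⟨u, v, huv, hu, hv⟩
        apply hadj
        rw [← hu, ← hv]
        exact (emb_adj hk z u v).mpr huv
      rw [h0, Finset.sum_congr rfl fun z _ => hz z, Finset.sum_const, smul_zero, mul_zero]
  have hcoef : coef (torus (2 * k) d) s t = fun q => c * ∑ z, A z q := by
    funext q
    rw [← hdecomp q, hc]
    field_simp
  have step1 : nrm (coef (torus (2 * k) d) s t) p ≤ c * ∑ z, nrm (A z) p := by
    rw [hcoef]
    have := nrm_smul (c := c) (a := fun q => ∑ z, A z q) hp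
    rw [this, abs_of_pos hc0]
    exact mul_le_mul_of_nonneg_left (nrm_sum_le Finset.univ A hp) hc0.le
  have hcomp : ∀ z, nrm (A z) p
      = nrm (coef (torus 2 d) (fun u => s (emb k z u)) (fun u => t (emb k z u))) p := by
    intro z
    refine nrm_comp (fun q : (Fin d → ZMod 2) × (Fin d → ZMod 2) =>
      (emb k z q.1, emb k z q.2)) ?_ _ _ ?_ ?_ p
    · intro q q' h
      exact Prod.ext (emb_inj hk z (congrArg Prod.fst h)) (emb_inj hk z (congrArg Prod.snd h))
    · intro q hq
      rw [hA]
      simp only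
      rw [if_neg]
      rintro ⟨u, v, _, hu, hv⟩
      exact hq ⟨(u, v), Prod.ext hu hv⟩
    · rintro ⟨u, v⟩
      rw [hA]
      unfold coef
      simp only
      by_cases h : (torus 2 d).Adj u v
      · rw [if_pos ⟨u, v, h, rfl, rfl⟩, if_pos h]
      · rw [if_neg, if_neg h]
        rintro ⟨u', v', huv', hu', hv'⟩
        exact h (emb_inj hk z hu' ▸ emb_inj hk z hv' ▸ huv')
  have hFG : ∑ z, Real.sqrt (∑ u, s (emb k z u) ^ 2) * Real.sqrt (∑ u, t (emb k z u) ^ 2)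
      ≤ 2 ^ d := by
    set F := fun z => Real.sqrt (∑ u, s (emb k z u) ^ 2) with hF
    set G := fun z => Real.sqrt (∑ u, t (emb k z u) ^ 2) with hG
    have hF2 : ∑ z, F z ^ 2 ≤ 2 ^ d := by
      have h1 : ∀ z, F z ^ 2 = ∑ u, s (emb k z u) ^ 2 := fun z =>
        Real.sq_sqrt (Finset.sum_nonneg fun _ _ => sq_nonneg _)
      rw [Finset.sum_congr rfl fun z _ => h1 z, sum_emb hk (fun x => s x ^ 2)]
      exact mul_le_of_le_one_right (by positivity) hs
    have hG2 : ∑ z, G z ^ 2 ≤ 2 ^ d := by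
      have h1 : ∀ z, G z ^ 2 = ∑ u, t (emb k z u) ^ 2 := fun z =>
        Real.sq_sqrt (Finset.sum_nonneg fun _ _ => sq_nonneg _)
      rw [Finset.sum_congr rfl fun z _ => h1 z, sum_emb hk (fun x => t x ^ 2)]
      exact mul_le_of_le_one_right (by positivity) ht
    have hCS := Finset.sum_mul_sq_le_sq_mul_sq Finset.univ F G
    have hFGnn : 0 ≤ ∑ z, F z * G z :=
      Finset.sum_nonneg fun z _ => mul_nonneg (Real.sqrt_nonneg _) (Real.sqrt_nonneg _)
    have hF2nn : 0 ≤ ∑ z, F z ^ 2 := Finset.sum_nonneg fun z _ => sq_nonneg _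
    have hG2nn : 0 ≤ ∑ z, G z ^ 2 := Finset.sum_nonneg fun z _ => sq_nonneg _
    have h2d : (0:ℝ) ≤ 2 ^ d := by positivity
    nlinarith [hCS, hF2, hG2, hFGnn, hF2nn, hG2nn, h2d]
  have step2 : ∑ z, nrm (A z) p ≤ 2 ^ d * N := by
    calc ∑ z, nrm (A z) p
        ≤ ∑ z, Real.sqrt (∑ u, s (emb k z u) ^ 2) * Real.sqrt (∑ u, t (emb k z u) ^ 2) * N := by
          refine Finset.sum_le_sum fun z _ => ?_
          rw [hcomp z]
          exact nrm_coef_le _ _ _ hp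
      _ = (∑ z, Real.sqrt (∑ u, s (emb k z u) ^ 2) * Real.sqrt (∑ u, t (emb k z u) ^ 2)) * N :=
          (Finset.sum_mul _ _ _).symm
      _ ≤ 2 ^ d * N := mul_le_mul_of_nonneg_right hFG hN0
  have hfin : c * (2 ^ d * N) = 2 * N := by
    have h2d : (2:ℝ) ^ d = 2 ^ (d - 1) * 2 := by
      rw [← pow_succ]
      congr 1
      omega
    rw [hc, h2d]
    have : ((2:ℝ) ^ (d-1)) ≠ 0 := by positivity
    field_simp
  calc nrm (coef (torus (2 * k) d) s t) p
      ≤ c * ∑ z, nrm (A z) p := step1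
    _ ≤ c * (2 ^ d * N) := mul_le_mul_of_nonneg_left step2 hc0.le
    _ = 2 * N := hfin

end Stmt16Aux

theorem stmt16
    {Ω₁ : Type*} [MeasureSpace Ω₁] [IsProbabilityMeasure (ℙ : Measure Ω₁)]
    {Ω₂ : Type*} [MeasureSpace Ω₂] [IsProbabilityMeasure (ℙ : Measure Ω₂)]
    (k d : ℕ) (hk : 1 ≤ k) (hd : 1 ≤ d) [NeZero (2 * k)]
    (ε₁ : ((Fin d → ZMod 2) × (Fin d → ZMod 2)) → Ω₁ → ℝ)
    (hmeas₁ : ∀ q, Measurable (ε₁ q))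
    (hindep₁ : iIndepFun ε₁ ℙ)
    (hval₁ : ∀ q ω, ε₁ q ω = 1 ∨ ε₁ q ω = -1)
    (hsym₁ : ∀ q, ℙ {ω | ε₁ q ω = 1} = 1 / 2)
    (ε₂ : ((Fin d → ZMod (2 * k)) × (Fin d → ZMod (2 * k))) → Ω₂ → ℝ)
    (hmeas₂ : ∀ q, Measurable (ε₂ q))
    (hindep₂ : iIndepFun ε₂ ℙ)
    (hval₂ : ∀ q ω, ε₂ q ω = 1 ∨ ε₂ q ω = -1)
    (hsym₂ : ∀ q, ℙ {ω | ε₂ q ω = 1} = 1 / 2)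
    (p : ℝ) (hp : 1 ≤ p) :
    graphRadNorm (torus 2 d) ε₁ p ≤ graphRadNorm (torus (2 * k) d) ε₂ p ∧
      graphRadNorm (torus (2 * k) d) ε₂ p ≤ 2 * graphRadNorm (torus 2 d) ε₁ p := by
  rw [Stmt16Aux.graphRadNorm_eq (torus 2 d) ε₁ hmeas₁ hindep₁ hval₁ hsym₁ p,
      Stmt16Aux.graphRadNorm_eq (torus (2 * k) d) ε₂ hmeas₂ hindep₂ hval₂ hsym₂ p]
  constructor
  · exact Stmt16Aux.lower_det k d hk hp
  · rcases Nat.lt_or_ge k 2 with h | h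
    · obtain rfl : k = 1 := by omega
      have h0 : (0:ℝ) ≤ sSup (Stmt16Aux.detSet (torus 2 d) p) :=
        Stmt16Aux.sSup_detSet_nonneg _ hp
      show sSup (Stmt16Aux.detSet (torus 2 d) p) ≤ 2 * sSup (Stmt16Aux.detSet (torus 2 d) p)
      linarith
    · exact Stmt16Aux.upper_det k d h hd hp
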